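/- Let A and B be positive invertible bounded operators on a complex Hilbert space H. Then (A + B)/2 ≤ (1/8)·(A ♯ B)·(A⁻¹B + B⁻¹A + 6·I). -/

import Mathlib

set_option synthInstance.maxHeartbeats 1000000
set_option maxHeartbeats 1000000

open scoped InnerProductSpace

variable {H : Type*} [NormedAddCommGroup H] [InnerProductSpace ℂ H] [CompleteSpace H]

/-- The operator geometric mean `A ♯ B = A^(1/2) (A^(-1/2) B A^(-1/2))^(1/2) A^(1/2)`,
where square roots are given by the continuous functional calculus. -/
noncomputable def geomMean (A B : H →L[ℂ] H) : H →L[ℂ] H :=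
  CFC.sqrt A * CFC.sqrt (Ring.inverse (CFC.sqrt A) * B * Ring.inverse (CFC.sqrt A)) * CFC.sqrt A


lemma scalar_ineq (t : ℝ) (ht : 0 < t) :
    (1/2 : ℝ) * (1 + t) ≤ (1/8 : ℝ) * (Real.sqrt t * (t + t⁻¹ + 6)) := by
  set s := Real.sqrt t with hs
  have hs0 : 0 < s := Real.sqrt_pos.mpr ht
  have hs2 : s ^ 2 = t := Real.sq_sqrt ht.le
  rw [← hs2, ← sub_nonneg]
  have expand : (1/8:ℝ)*(s * (s^2 + (s^2)⁻¹ + 6)) - (1/2:ℝ)*(1+s^2) = (s-1)^4 / (8*s) := by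
    field_simp; ring
  rw [expand]; positivity

lemma sqrt_eq_cfc_real (T : H →L[ℂ] H) (hT : 0 ≤ T) :
    CFC.sqrt T = cfc Real.sqrt T := by
  rw [CFC.sqrt_eq_cfc, cfc_nnreal_eq_real _ _ hT]
  exact cfc_congr fun x hx => by rw [Real.sqrt]

lemma core_ineq (T : H →L[ℂ] H) (hT : 0 ≤ T) (hT' : IsUnit T) :
    (1/2 : ℝ) • ((1 : H →L[ℂ] H) + T) ≤
      (1/8 : ℝ) • (CFC.sqrt T * (T + Ring.inverse T + (6:ℝ) • (1 : H →L[ℂ] H))) := by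
  have hTsa : IsSelfAdjoint T := .of_nonneg hT
  have hspec : ∀ x ∈ spectrum ℝ T, 0 < x := fun x hx =>
    lt_of_le_of_ne (spectrum_nonneg_of_nonneg hT hx)
      (fun h => spectrum.zero_notMem ℝ hT' (h ▸ hx))
  have hcinv : ContinuousOn (fun x : ℝ => x⁻¹) (spectrum ℝ T) :=
    continuousOn_id.inv₀ fun x hx => (hspec x hx).ne'
  have hcsqrt : ContinuousOn Real.sqrt (spectrum ℝ T) := Real.continuous_sqrt.continuousOn
  have e1 : cfc (fun x : ℝ => x + x⁻¹ + 6) T = T + Ring.inverse T + (6:ℝ) • (1 : H →L[ℂ] H) := by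
    rw [cfc_add T (fun x : ℝ => x + x⁻¹) (fun _ => (6:ℝ)) (continuousOn_id.add hcinv)
        continuousOn_const,
      cfc_add T (fun x : ℝ => x) (fun x : ℝ => x⁻¹) continuousOn_id hcinv, cfc_id' ℝ T,
      cfc_inv (fun x : ℝ => x) T (fun x hx => (hspec x hx).ne') continuousOn_id, cfc_id' ℝ T, cfc_const (6:ℝ) T,
      Algebra.algebraMap_eq_smul_one]
  have e2 : cfc (fun x : ℝ => Real.sqrt x * (x + x⁻¹ + 6)) T
      = CFC.sqrt T * (T + Ring.inverse T + (6:ℝ) • (1 : H →L[ℂ] H)) := by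
    rw [cfc_mul Real.sqrt (fun x : ℝ => x + x⁻¹ + 6) T hcsqrt
        ((continuousOn_id.add hcinv).add continuousOn_const), e1, sqrt_eq_cfc_real T hT]
  have e3 : cfc (fun x : ℝ => 1 + x) T = (1 : H →L[ℂ] H) + T := by
    rw [cfc_add T (fun _ : ℝ => (1:ℝ)) (fun x : ℝ => x) continuousOn_const continuousOn_id,
      cfc_const (1:ℝ) T, cfc_id' ℝ T, map_one]
  calc (1/2 : ℝ) • ((1 : H →L[ℂ] H) + T) = cfc (fun x : ℝ => (1/2 : ℝ) * (1 + x)) T := by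
        rw [show (fun x : ℝ => (1/2:ℝ) * (1 + x)) = (fun x : ℝ => (1/2:ℝ) • ((fun y : ℝ => 1 + y) x)) from rfl,
          cfc_smul (1/2 : ℝ) (fun y : ℝ => 1 + y) T (continuousOn_const.add continuousOn_id), e3]
    _ ≤ cfc (fun x : ℝ => (1/8 : ℝ) * (Real.sqrt x * (x + x⁻¹ + 6))) T := by
        refine cfc_mono (fun x hx => scalar_ineq x (hspec x hx)) ?_ ?_
        · exact continuousOn_const.mul (continuousOn_const.add continuousOn_id)
        · exact continuousOn_const.mul (hcsqrt.mul ((continuousOn_id.add hcinv).add continuousOn_const))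
    _ = (1/8 : ℝ) • (CFC.sqrt T * (T + Ring.inverse T + (6:ℝ) • (1 : H →L[ℂ] H))) := by
        rw [show (fun x : ℝ => (1/8:ℝ) * (Real.sqrt x * (x + x⁻¹ + 6)))
            = (fun x : ℝ => (1/8:ℝ) • ((fun y : ℝ => Real.sqrt y * (y + y⁻¹ + 6)) x)) from rfl,
          cfc_smul (1/8 : ℝ) (fun y : ℝ => Real.sqrt y * (y + y⁻¹ + 6)) T
            (hcsqrt.mul ((continuousOn_id.add hcinv).add continuousOn_const)), e2]
lemma ring_inverse_eq {M : Type*} [MonoidWithZero M] {a b : M} (h : IsUnit a)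
    (hab : a * b = 1) : Ring.inverse a = b := by
  calc Ring.inverse a = Ring.inverse a * (a * b) := by rw [hab, mul_one]
    _ = (Ring.inverse a * a) * b := by rw [mul_assoc]
    _ = b := by rw [Ring.inverse_mul_cancel _ h, one_mul]

theorem operator_reverse_amgm (A B : H →L[ℂ] H)
    (hA : 0 ≤ A) (hA' : IsUnit A) (hB : 0 ≤ B) (hB' : IsUnit B) :
    (1 / 2 : ℝ) • (A + B) ≤
      (1 / 8 : ℝ) •
        (geomMean A B * (Ring.inverse A * B + Ring.inverse B * A + (6 : ℝ) • (1 : H →L[ℂ] H))) := by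
  set S := CFC.sqrt A with hSdef
  have hS : 0 ≤ S := CFC.sqrt_nonneg _
  have hSsa : IsSelfAdjoint S := .of_nonneg hS
  have hSS : S * S = A := CFC.sqrt_mul_sqrt_self A hA
  have hSunit : IsUnit S := by
    rw [hSdef, CFC.sqrt_eq_cfc]
    refine isUnit_cfc _ A NNReal.continuous_sqrt.continuousOn hA (fun x hx => ?_)
    have hx0 : x ≠ 0 := fun h => spectrum.zero_notMem NNReal hA' (h ▸ hx)
    simpa using hx0
  set S' := Ring.inverse S with hS'def
  have hS'S : S' * S = 1 := Ring.inverse_mul_cancel S hSunit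
  have hSS' : S * S' = 1 := Ring.mul_inverse_cancel S hSunit
  have hS'sa : IsSelfAdjoint S' := by
    rw [hS'def, IsSelfAdjoint, ← Ring.inverse_star, hSsa.star_eq]
  set T := S' * B * S' with hTdef
  have hT : 0 ≤ T := by
    have := star_left_conjugate_nonneg hB S'
    rwa [hS'sa.star_eq] at this
  have hT' : IsUnit T := (hSunit.ringInverse.mul hB').mul hSunit.ringInverse
  have hTT' : T * Ring.inverse T = 1 := Ring.mul_inverse_cancel T hT'
  have cSS' : ∀ x : H →L[ℂ] H, S * (S' * x) = x := fun x => by rw [← mul_assoc, hSS', one_mul]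
  have cS'S : ∀ x : H →L[ℂ] H, S' * (S * x) = x := fun x => by rw [← mul_assoc, hS'S, one_mul]
  have cTT' : ∀ x : H →L[ℂ] H, T * (Ring.inverse T * x) = x := fun x => by
    rw [← mul_assoc, hTT', one_mul]
  have hBeq : S * T * S = B := by
    rw [hTdef]
    simp only [mul_assoc, hS'S, mul_one]
    rw [cSS']
  have hinvA : Ring.inverse A = S' * S' := by
    refine ring_inverse_eq hA' ?_
    rw [← hSS]
    simp only [mul_assoc]
    rw [cSS', hSS']
  have hinvB : Ring.inverse B = S' * Ring.inverse T * S' := by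
    refine ring_inverse_eq hB' ?_
    rw [← hBeq]
    simp only [mul_assoc]
    rw [cSS', cTT', hSS']
  have c1 : Ring.inverse A * B = S' * T * S := by
    rw [hinvA, ← hBeq]
    simp only [mul_assoc]
    rw [cS'S]
  have c2 : Ring.inverse B * A = S' * Ring.inverse T * S := by
    rw [hinvB, ← hSS]
    simp only [mul_assoc]
    rw [cS'S]
  have key : Ring.inverse A * B + Ring.inverse B * A + (6:ℝ) • (1 : H →L[ℂ] H)
      = S' * (T + Ring.inverse T + (6:ℝ) • (1 : H →L[ℂ] H)) * S := by
    rw [c1, c2]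
    simp only [mul_add, add_mul, mul_smul_comm, smul_mul_assoc, mul_one]
    simp only [mul_assoc, hS'S, smul_mul_assoc]
  have hgm : geomMean A B = S * CFC.sqrt T * S := rfl
  have lhs_eq : A + B = S * ((1 : H →L[ℂ] H) + T) * S := by
    rw [← hBeq, ← hSS]; noncomm_ring
  have rhs_eq : geomMean A B * (Ring.inverse A * B + Ring.inverse B * A
        + (6:ℝ) • (1 : H →L[ℂ] H))
      = S * (CFC.sqrt T * (T + Ring.inverse T + (6:ℝ) • (1 : H →L[ℂ] H))) * S := by
    rw [key, hgm]
    simp only [mul_assoc]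
    rw [cSS']
  rw [lhs_eq, rhs_eq]
  have smul_conj : ∀ (r : ℝ) (Y : H →L[ℂ] H), r • (S * Y * S) = S * (r • Y) * S := fun r Y => by
    rw [mul_smul_comm, smul_mul_assoc]
  rw [smul_conj, smul_conj]
  have hcore : (1/2 : ℝ) • ((1 : H →L[ℂ] H) + T) ≤
      (1/8 : ℝ) • (CFC.sqrt T * (T + Ring.inverse T + (6:ℝ) • (1 : H →L[ℂ] H))) := core_ineq T hT hT'
  have := star_left_conjugate_le_conjugate hcore S
  rwa [hSsa.star_eq] at this
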